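/- Let (R, m) be a local commutative ring, S a commutative ring, f : R → S a ring homomorphism, and J a proper ideal of S with J ⊆ Jac(S). Assume f maps every regular element of R to a regular element of S and that R ⋈^f J satisfies condition ★. If R is a Prüfer ring and J = f(r)·J for every regular element r of R, then R ⋈^f J is a Prüfer ring. -/

import Mathlib

open Pointwise

/-- The amalgamation `R ⋈^f J` of `R` with `S` along the ideal `J` with respect to
`f : R →+* S`, as a subring of `R × S`. -/
def amalgamation {R S : Type*} [CommRing R] [CommRing S] (f : R →+* S) (J : Ideal S) :
    Subring (R × S) where
  carrier := {p | ∃ j ∈ J, p.2 = f p.1 + j}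
  zero_mem' := ⟨0, J.zero_mem, by simp⟩
  one_mem' := ⟨0, J.zero_mem, by simp⟩
  add_mem' := by
    rintro ⟨a, a'⟩ ⟨b, b'⟩ ⟨j, hj, h1⟩ ⟨k, hk, h2⟩
    exact ⟨j + k, J.add_mem hj hk, by simp_all; ring⟩
  neg_mem' := by
    rintro ⟨a, a'⟩ ⟨j, hj, h1⟩
    exact ⟨-j, J.neg_mem hj, by simp_all; ring⟩
  mul_mem' := by
    rintro ⟨a, a'⟩ ⟨b, b'⟩ ⟨j, hj, h1⟩ ⟨k, hk, h2⟩
    refine ⟨f a * k + j * f b + j * k, ?_, by simp_all; ring⟩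
    exact J.add_mem (J.add_mem (J.mul_mem_left _ hk) (J.mul_mem_right _ hj))
      (J.mul_mem_right _ hj)

/-- The set of zero-divisors of a commutative ring `A`. -/
def zdivSet (A : Type*) [CommRing A] : Set A := {a | ∃ b, b ≠ 0 ∧ a * b = 0}

/-- A commutative ring is a Prüfer ring if every nonzero finitely generated regular ideal
is projective (equivalently, invertible). -/
def IsPruferRing (A : Type*) [CommRing A] : Prop :=
  ∀ I : Ideal A, I ≠ ⊥ → I.FG → (∃ r ∈ I, r ∈ nonZeroDivisors A) → Module.Projective A I

/-- Condition `★`: the zero-divisors of `R ⋈^f J` are exactly the elements whose first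
coordinate is a zero-divisor of `R` together with the elements `(r, f r + j)` such that
`f r + j` is killed by some nonzero element of `J`. -/
def conditionStar {R S : Type*} [CommRing R] [CommRing S] (f : R →+* S) (J : Ideal S) : Prop :=
  ∀ x : amalgamation f J, x ∈ zdivSet (amalgamation f J) ↔
    ((x : R × S).1 ∈ zdivSet R ∨ ∃ j' ∈ J, j' ≠ 0 ∧ j' * (x : R × S).2 = 0)

lemma mem_amalgamation_iff {R S : Type*} [CommRing R] [CommRing S] (f : R →+* S) (J : Ideal S)
    (p : R × S) : p ∈ amalgamation f J ↔ ∃ j ∈ J, p.2 = f p.1 + j := Iff.rfl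

/-- Over a local ring, a finitely generated projective ideal containing a regular element
is principal, generated by a regular element. -/
lemma principal_of_proj {R : Type*} [CommRing R] [IsLocalRing R] (I : Ideal R)
    (hfg : I.FG) (hproj : Module.Projective R I)
    (r : R) (hrI : r ∈ I) (hr : r ∈ nonZeroDivisors R) :
    ∃ a, a ∈ nonZeroDivisors R ∧ I = Ideal.span {a} := by
  haveI : Module.Finite R I := Module.Finite.iff_fg.mpr hfg
  haveI := hproj
  haveI : Module.FinitePresentation R I := Module.finitePresentation_of_projective R I
  haveI : Module.Free R I := Module.free_of_flat_of_isLocalRing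
  set ι := Module.Free.ChooseBasisIndex R I with hι
  let b : Module.Basis ι R I := Module.Free.chooseBasis R I
  have hrne : r ≠ 0 := by
    intro h
    exact one_ne_zero (mem_nonZeroDivisors_iff_right.mp hr 1 (by simp [h]))
  haveI : Nonempty ι := by
    by_contra h
    haveI : IsEmpty ι := not_nonempty_iff.mp h
    haveI : Subsingleton (ι →₀ R) := inferInstance
    have : (⟨r, hrI⟩ : I) = 0 := b.repr.injective (Subsingleton.elim _ _)
    exact hrne (congrArg Subtype.val this)
  haveI : Subsingleton ι := by
    constructor
    intro i j
    by_contra hij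
    have hz : ((b j : R) • b i - (b i : R) • b j : I) = 0 := by
      apply Subtype.ext
      push_cast
      simp [smul_eq_mul, mul_comm]
    have := congrArg (fun m => b.repr m i) hz
    simp [Finsupp.single_apply, Ne.symm hij] at this
    exact b.ne_zero j this
  haveI : Unique ι := uniqueOfSubsingleton (Classical.arbitrary ι)
  obtain ⟨i₀⟩ := ‹Nonempty ι›
  refine ⟨(b i₀ : R), ?_, ?_⟩
  · -- regular
    have hrsp : (⟨r, hrI⟩ : I) ∈ Submodule.span R (Set.range ⇑b) := b.mem_span _
    have hrange : Set.range ⇑b = {b i₀} := by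
      ext m; simp [Subsingleton.elim _ i₀, eq_comm]
    rw [hrange, Submodule.mem_span_singleton] at hrsp
    obtain ⟨c, hc⟩ := hrsp
    have hc' : c * (b i₀ : R) = r := congrArg Subtype.val hc
    rw [mem_nonZeroDivisors_iff_right]
    intro x hx
    refine mem_nonZeroDivisors_iff_right.mp hr x ?_
    rw [← hc']
    calc x * (c * (b i₀:R)) = c * (x * (b i₀:R)) := by ring
    _ = 0 := by rw [hx, mul_zero]
  · apply le_antisymm
    · intro x hx
      have hsp : (⟨x, hx⟩ : I) ∈ Submodule.span R (Set.range ⇑b) := b.mem_span _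
      have hrange : Set.range ⇑b = {b i₀} := by
        ext m; simp [Subsingleton.elim _ i₀, eq_comm]
      rw [hrange, Submodule.mem_span_singleton] at hsp
      obtain ⟨c, hc⟩ := hsp
      have hc' : c * (b i₀ : R) = x := congrArg Subtype.val hc
      rw [Ideal.mem_span_singleton]
      exact ⟨c, by rw [← hc', mul_comm]⟩
    · rw [Ideal.span_le, Set.singleton_subset_iff]
      exact (b i₀).2

theorem stmt8 {R S : Type*} [CommRing R] [CommRing S] [IsLocalRing R]
    (f : R →+* S) (J : Ideal S) (hJ : J ≠ ⊤) (hJjac : J ≤ Ideal.jacobson (⊥ : Ideal S))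
    (hreg : ∀ r ∈ nonZeroDivisors R, f r ∈ nonZeroDivisors S)
    (hstar : conditionStar f J)
    (hR : IsPruferRing R) (hrJ : ∀ r ∈ nonZeroDivisors R, f r • J = J) :
    IsPruferRing (amalgamation f J) := by
  intro I hI0 hIfg hIr
  obtain ⟨y, hyI, hyreg⟩ := hIr
  -- Step A: the first coordinate of y is regular in R
  have hy1 : (y : R × S).1 ∈ nonZeroDivisors R := by
    rw [mem_nonZeroDivisors_iff_right]
    intro x hx
    by_contra hxne
    have hzd : (y : R × S).1 ∈ zdivSet R := ⟨x, hxne, by rw [mul_comm]; exact hx⟩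
    obtain ⟨b, hbne, hyb⟩ := (hstar y).mpr (Or.inl hzd)
    exact hbne (mem_nonZeroDivisors_iff_right.mp hyreg b (by rw [mul_comm]; exact hyb))
  -- Step B: the projected ideal
  set π : amalgamation f J →+* R := (RingHom.fst R S).comp (amalgamation f J).subtype with hπ
  have hπsurj : Function.Surjective π := by
    intro r
    exact ⟨⟨(r, f r), ⟨0, J.zero_mem, by simp⟩⟩, rfl⟩
  set I₀ := I.map π with hI₀
  have hI₀fg : I₀.FG := Ideal.FG.map hIfg π
  have hrI₀ : (y : R × S).1 ∈ I₀ := Ideal.mem_map_of_mem π hyI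
  have hrne : (y : R × S).1 ≠ 0 := fun h => one_ne_zero (mem_nonZeroDivisors_iff_right.mp hy1 1 (by simp [h]))
  have hI₀ne : I₀ ≠ ⊥ := fun h => hrne (by simpa [h] using hrI₀)
  have hproj := hR I₀ hI₀ne hI₀fg ⟨_, hrI₀, hy1⟩
  obtain ⟨a, ha, hspan⟩ := principal_of_proj I₀ hI₀fg hproj _ hrI₀ hy1
  -- Step D: lift a generator
  have haI₀ : a ∈ I₀ := hspan ▸ Ideal.mem_span_singleton_self a
  obtain ⟨x₁, hx₁I, hx₁a⟩ := (Ideal.mem_map_iff_of_surjective π hπsurj).mp haI₀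
  obtain ⟨j₁, hj₁J, hj₁⟩ := x₁.2
  have hx₁1 : (x₁ : R × S).1 = a := hx₁a
  -- helper : every element of J is f a times an element of J
  have hJfa : ∀ j ∈ J, ∃ k ∈ J, f a * k = j := by
    intro j hj
    have : j ∈ f a • (J : Set S) := by
      rw [← Submodule.coe_pointwise_smul, hrJ a ha]
      exact hj
    obtain ⟨k, hk, hfk⟩ := this
    exact ⟨k, hk, hfk⟩
  -- Step E: x₂ = (a, f a) belongs to I
  have hfamem : ((a, f a) : R × S) ∈ amalgamation f J := ⟨0, J.zero_mem, by simp⟩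
  set x₂ : amalgamation f J := ⟨(a, f a), hfamem⟩ with hx₂def
  obtain ⟨k, hkJ, hkfa⟩ := hJfa j₁ hj₁J
  have hkunit : IsUnit ((1 : S) + k) := by
    have := Ideal.mem_jacobson_bot.mp (hJjac hkJ) 1
    simpa [add_comm] using this
  obtain ⟨u, hu⟩ := hkunit
  set v : S := ((u⁻¹ : Sˣ) : S) with hv
  have hvu : v * (1 + k) = 1 := by rw [hv, ← hu]; exact u.inv_mul
  have hvmem : ((1, v) : R × S) ∈ amalgamation f J := by
    refine ⟨v - 1, ?_, by simp⟩
    have : v - 1 = -(v * k) := by linear_combination hvu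
    rw [this]
    exact J.neg_mem (J.mul_mem_left _ hkJ)
  have hx₂x₁ : x₂ = x₁ * ⟨(1, v), hvmem⟩ := by
    apply Subtype.ext
    apply Prod.ext
    · show a = (x₁ : R × S).1 * 1
      rw [hx₁1, mul_one]
    · show f a = (x₁ : R × S).2 * v
      rw [hj₁, hx₁1, ← hkfa]
      linear_combination (-(f a)) * hvu
  have hx₂I : x₂ ∈ I := hx₂x₁ ▸ I.mul_mem_right _ hx₁I
  -- x₂ is regular in the amalgamation
  have hx₂reg : x₂ ∈ nonZeroDivisors (amalgamation f J) := by
    rw [mem_nonZeroDivisors_iff_right]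
    intro z hz
    obtain ⟨l, hlJ, hl⟩ := z.2
    have hzv : (z : R × S) * ((a, f a) : R × S) = 0 := congrArg Subtype.val hz
    have hz1 : (z : R × S).1 * a = 0 := congrArg Prod.fst hzv
    have hz2 : (z : R × S).2 * f a = 0 := congrArg Prod.snd hzv
    have hb0 : (z : R × S).1 = 0 := mem_nonZeroDivisors_iff_right.mp ha _ hz1
    have hl0 : (z : R × S).2 = 0 := by
      refine mem_nonZeroDivisors_iff_right.mp (hreg a ha) _ hz2
    exact Subtype.ext (Prod.ext hb0 hl0)
  -- I = span {x₂}
  have hIspan : I = Ideal.span {x₂} := by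
    apply le_antisymm
    · intro w hw
      obtain ⟨k', hk'J, hk'⟩ := w.2
      have hw1 : (w : R × S).1 ∈ I₀ := Ideal.mem_map_of_mem π hw
      rw [hspan, Ideal.mem_span_singleton] at hw1
      obtain ⟨c, hc⟩ := hw1
      obtain ⟨k'', hk''J, hk''fa⟩ := hJfa k' hk'J
      have hzmem : ((c, f c + k'') : R × S) ∈ amalgamation f J := ⟨k'', hk''J, rfl⟩
      rw [Ideal.mem_span_singleton]
      refine ⟨⟨(c, f c + k''), hzmem⟩, ?_⟩
      apply Subtype.ext
      apply Prod.ext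
      · show (w : R × S).1 = a * c
        rw [hc, mul_comm]
      · show (w : R × S).2 = f a * (f c + k'')
        rw [hk', hc, map_mul]
        linear_combination -hk''fa
    · rw [Ideal.span_le, Set.singleton_subset_iff]
      exact hx₂I
  -- conclude projectivity
  have hmap : Function.Bijective
      (LinearMap.toSpanSingleton (amalgamation f J) I (⟨x₂, hx₂I⟩ : I)) := by
    constructor
    · intro c₁ c₂ hcc
      have h1 : c₁ * x₂ = c₂ * x₂ := congrArg Subtype.val hcc
      have h2 : (c₁ - c₂) * x₂ = 0 := by rw [sub_mul, h1, sub_self]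
      exact sub_eq_zero.mp (mem_nonZeroDivisors_iff_right.mp hx₂reg _ h2)
    · rintro ⟨w, hw⟩
      rw [hIspan, Ideal.mem_span_singleton] at hw
      obtain ⟨c, hc⟩ := hw
      refine ⟨c, Subtype.ext ?_⟩
      show c * x₂ = w
      rw [hc, mul_comm]
  exact Module.Projective.of_equiv (LinearEquiv.ofBijective _ hmap)
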